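/- Let B be a tensored and cotensored V-category with finite limits and arbitrary class-indexed intersections of monomorphisms. Then (StrEpi_V B, Mono_V B) = (StrEpi B, Mono B) is a V-factorization system on B. -/

import Mathlib

open CategoryTheory CategoryTheory.Limits CategoryTheory.MonoidalCategory

universe w v₁ v₂ v₃ v₄ u₁ u₂ u₃ u₄

namespace EnrichedFS

variable (V : Type u₁) [Category.{v₁} V] [MonoidalCategory V] [SymmetricCategory V]
  [MonoidalClosed V]
variable (B : Type u₂) [Category.{v₂} B] [EnrichedOrdinaryCategory V B]

/-- `e` is `V`-orthogonal to `m`: the square of hom-objects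
with top `B(A₂,m)`, left `B(e,X₁)`, right `B(e,X₂)`, bottom `B(A₁,m)`
is a pullback in `V`. -/
def VOrth {A₁ A₂ X₁ X₂ : B} (e : A₁ ⟶ A₂) (m : X₁ ⟶ X₂) : Prop :=
  IsPullback (eHomWhiskerLeft V A₂ m) (eHomWhiskerRight V e X₁)
    (eHomWhiskerRight V e X₂) (eHomWhiskerLeft V A₁ m)

/-- `H^{↓V}`: the class of morphisms to which every member of `H` is `V`-orthogonal. -/
def vRlp (H : MorphismProperty B) : MorphismProperty B :=
  fun _ _ m => ∀ ⦃A₁ A₂ : B⦄ (e : A₁ ⟶ A₂), H e → VOrth V B e m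

/-- `M^{↑V}`: the class of morphisms which are `V`-orthogonal to every member of `M`. -/
def vLlp (M : MorphismProperty B) : MorphismProperty B :=
  fun _ _ e => ∀ ⦃X₁ X₂ : B⦄ (m : X₁ ⟶ X₂), M m → VOrth V B e m

/-- ordinary orthogonality: unique diagonal fillers for every commutative square. -/
def OrdOrth {A₁ A₂ X₁ X₂ : B} (e : A₁ ⟶ A₂) (m : X₁ ⟶ X₂) : Prop :=
  ∀ (u : A₁ ⟶ X₁) (v : A₂ ⟶ X₂), u ≫ m = e ≫ v →
    ∃! d : A₂ ⟶ X₁, e ≫ d = u ∧ d ≫ m = v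

/-- `H^{↓}` (ordinary). -/
def ordRlp (H : MorphismProperty B) : MorphismProperty B :=
  fun _ _ m => ∀ ⦃A₁ A₂ : B⦄ (e : A₁ ⟶ A₂), H e → OrdOrth B e m

/-- `M^{↑}` (ordinary). -/
def ordLlp (M : MorphismProperty B) : MorphismProperty B :=
  fun _ _ e => ∀ ⦃X₁ X₂ : B⦄ (m : X₁ ⟶ X₂), M m → OrdOrth B e m

/-- `(E,M)` is a `V`-prefactorization system: `E^{↓V} = M` and `M^{↑V} = E`. -/
def IsVPrefactorization (E M : MorphismProperty B) : Prop :=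
  vRlp V B E = M ∧ vLlp V B M = E

/-- `(E,M)` is an ordinary prefactorization system. -/
def IsOrdPrefactorization (E M : MorphismProperty B) : Prop :=
  ordRlp B E = M ∧ ordLlp B M = E

/-- every morphism factors as a morphism in `E` followed by a morphism in `M`. -/
def FactorizationsExist (E M : MorphismProperty B) : Prop :=
  ∀ ⦃X Y : B⦄ (f : X ⟶ Y), ∃ (Z : B) (e : X ⟶ Z) (m : Z ⟶ Y), E e ∧ M m ∧ e ≫ m = f

/-- `(E,M)` is a `V`-factorization system. -/
def IsVFactorizationSystem (E M : MorphismProperty B) : Prop :=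
  IsVPrefactorization V B E M ∧ FactorizationsExist B E M

/-- `(E,M)` is an ordinary factorization system. -/
def IsOrdFactorizationSystem (E M : MorphismProperty B) : Prop :=
  IsOrdPrefactorization B E M ∧ FactorizationsExist B E M

/-- intersection of two classes of morphisms. -/
def interProp (M N : MorphismProperty B) : MorphismProperty B := fun _ _ f => M f ∧ N f

/-- `V`-monomorphisms. -/
def vMono : MorphismProperty B := fun _ _ m => ∀ A : B, Mono (eHomWhiskerLeft V A m)

/-- `V`-epimorphisms. -/
def vEpi : MorphismProperty B := fun _ _ e => ∀ A : B, Mono (eHomWhiskerRight V e A)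

/-- `V`-strong monomorphisms. -/
def vStrongMono : MorphismProperty B := fun _ _ m =>
  vMono V B m ∧ ∀ ⦃A₁ A₂ : B⦄ (e : A₁ ⟶ A₂), vEpi V B e → VOrth V B e m

/-- `V`-strong epimorphisms. -/
def vStrongEpi : MorphismProperty B := fun _ _ e =>
  vEpi V B e ∧ ∀ ⦃X₁ X₂ : B⦄ (m : X₁ ⟶ X₂), vMono V B m → VOrth V B e m

/-- ordinary monomorphisms, as a class. -/
def ordMono : MorphismProperty B := fun _ _ m => Mono m

/-- ordinary epimorphisms, as a class. -/
def ordEpi : MorphismProperty B := fun _ _ e => Epi e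

/-- ordinary strong monomorphisms. -/
def ordStrongMono : MorphismProperty B := fun _ _ m =>
  Mono m ∧ ∀ ⦃A₁ A₂ : B⦄ (e : A₁ ⟶ A₂), Epi e → OrdOrth B e m

/-- ordinary strong epimorphisms. -/
def ordStrongEpi : MorphismProperty B := fun _ _ e =>
  Epi e ∧ ∀ ⦃X₁ X₂ : B⦄ (m : X₁ ⟶ X₂), Mono m → OrdOrth B e m

/-- closure under composition with isomorphisms on either side. -/
def ClosedUnderIsoComp (E : MorphismProperty B) : Prop :=
  (∀ ⦃X Y Z : B⦄ (e : X ⟶ Y) (i : Y ⟶ Z), E e → IsIso i → E (e ≫ i)) ∧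
  (∀ ⦃X Y Z : B⦄ (i : X ⟶ Y) (e : Y ⟶ Z), IsIso i → E e → E (i ≫ e))

/-- a commutative square which is a `V`-pullback: it is sent to a pullback square
in `V` by every hom functor `B(A,-)`. -/
def IsVPullbackSq {P X Y Z : B} (p₁ : P ⟶ X) (p₂ : P ⟶ Y) (f : X ⟶ Z) (g : Y ⟶ Z) : Prop :=
  p₁ ≫ f = p₂ ≫ g ∧
    ∀ A : B, IsPullback (eHomWhiskerLeft V A p₁) (eHomWhiskerLeft V A p₂)
      (eHomWhiskerLeft V A f) (eHomWhiskerLeft V A g)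

/-- a commutative square which is a `V`-pushout: it is sent to a pullback square
in `V` by every hom functor `B(-,A)`. -/
def IsVPushoutSq {X Y₁ Y₂ Q : B} (f₁ : X ⟶ Y₁) (f₂ : X ⟶ Y₂) (i₁ : Y₁ ⟶ Q) (i₂ : Y₂ ⟶ Q) :
    Prop :=
  f₁ ≫ i₁ = f₂ ≫ i₂ ∧
    ∀ A : B, IsPullback (eHomWhiskerRight V i₁ A) (eHomWhiskerRight V i₂ A)
      (eHomWhiskerRight V f₁ A) (eHomWhiskerRight V f₂ A)

/-- `B` has `V`-kernel pairs. -/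
def HasVKernelPairs : Prop :=
  ∀ ⦃X Y : B⦄ (f : X ⟶ Y), ∃ (P : B) (p₁ p₂ : P ⟶ X), IsVPullbackSq V B p₁ p₂ f f

/-- `B` has `V`-cokernel pairs. -/
def HasVCokernelPairs : Prop :=
  ∀ ⦃X Y : B⦄ (f : X ⟶ Y), ∃ (Q : B) (i₁ i₂ : Y ⟶ Q), IsVPushoutSq V B f f i₁ i₂

/-- `m : P ⟶ C` is a `V`-fibre-product (`V`-wide-pullback) of the family `f i : X i ⟶ C`,
with projections `π i`. -/
def IsVFibreProduct {ι : Type w} {C : B} {X : ι → B} (f : ∀ i, X i ⟶ C)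
    {P : B} (m : P ⟶ C) (π : ∀ i, P ⟶ X i) : Prop :=
  (∀ i, π i ≫ f i = m) ∧
    ∀ (A : B) (Z : V) (z : Z ⟶ (A ⟶[V] C)) (zi : ∀ i, Z ⟶ (A ⟶[V] X i)),
      (∀ i, zi i ≫ eHomWhiskerLeft V A (f i) = z) →
        ∃! t : Z ⟶ (A ⟶[V] P), t ≫ eHomWhiskerLeft V A m = z ∧
          ∀ i, t ≫ eHomWhiskerLeft V A (π i) = zi i

/-- `m : P ⟶ C` is an ordinary fibre product (wide pullback) of the family `f i : X i ⟶ C`. -/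
def OrdIsFibreProduct {ι : Type w} {C : B} {X : ι → B} (f : ∀ i, X i ⟶ C)
    {P : B} (m : P ⟶ C) (π : ∀ i, P ⟶ X i) : Prop :=
  (∀ i, π i ≫ f i = m) ∧
    ∀ ⦃W' : B⦄ (z : W' ⟶ C) (zi : ∀ i, W' ⟶ X i), (∀ i, zi i ≫ f i = z) →
      ∃! t : W' ⟶ P, t ≫ m = z ∧ ∀ i, t ≫ π i = zi i

/-- a cone is a `V`-limit cone: it is sent to a limit cone in `V` by every `B(A,-)`. -/
def IsVLimitCone {J : Type u₃} [Category.{v₃} J] {D : J ⥤ B} (c : Cone D) : Prop :=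
  ∀ (A : B) (Z : V) (z : ∀ j : J, Z ⟶ (A ⟶[V] D.obj j)),
    (∀ ⦃j j' : J⦄ (φ : j ⟶ j'), z j ≫ eHomWhiskerLeft V A (D.map φ) = z j') →
      ∃! t : Z ⟶ (A ⟶[V] c.pt), ∀ j, t ≫ eHomWhiskerLeft V A (c.π.app j) = z j

/-- a cocone is a `V`-colimit cocone: it is sent to a limit cone in `V` by every `B(-,A)`. -/
def IsVColimitCocone {J : Type u₃} [Category.{v₃} J] {D : J ⥤ B} (c : Cocone D) : Prop :=
  ∀ (A : B) (Z : V) (z : ∀ j : J, Z ⟶ (D.obj j ⟶[V] A)),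
    (∀ ⦃j j' : J⦄ (φ : j ⟶ j'), z j' ≫ eHomWhiskerRight V (D.map φ) A = z j) →
      ∃! t : Z ⟶ (c.pt ⟶[V] A), ∀ j, t ≫ eHomWhiskerRight V (c.ι.app j) A = z j

/-- `B` has small `V`-limits. -/
def HasSmallVLimits : Prop :=
  ∀ (J : Type v₂) [SmallCategory J] (D : J ⥤ B), ∃ c : Cone D, IsVLimitCone V B c

/-- `B` has small `V`-colimits. -/
def HasSmallVColimits : Prop :=
  ∀ (J : Type v₂) [SmallCategory J] (D : J ⥤ B), ∃ c : Cocone D, IsVColimitCocone V B c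

/-- `B` has finite `V`-limits. -/
def HasFiniteVLimits : Prop :=
  ∀ (J : Type) [SmallCategory J] [FinCategory J] (D : J ⥤ B),
    ∃ c : Cone D, IsVLimitCone V B c

/-- `B` is well-powered with respect to the class `M`: every object has,
up to isomorphism, only a set of `M`-subobjects. -/
def WellPoweredWrt (M : MorphismProperty B) : Prop :=
  ∀ X : B, ∃ (ι : Type v₂) (Y : ι → B) (f : ∀ i, Y i ⟶ X), (∀ i, M (f i)) ∧
    ∀ ⦃Z : B⦄ (g : Z ⟶ X), M g → ∃ (i : ι) (h : Z ≅ Y i), h.hom ≫ f i = g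

/-- `B` is co-well-powered with respect to the class `E`. -/
def CoWellPoweredWrt (E : MorphismProperty B) : Prop :=
  ∀ X : B, ∃ (ι : Type v₂) (Y : ι → B) (f : ∀ i, X ⟶ Y i), (∀ i, E (f i)) ∧
    ∀ ⦃Z : B⦄ (g : X ⟶ Z), E g → ∃ (i : ι) (h : Y i ≅ Z), f i ≫ h.hom = g

/-- comparison morphism `B(T, X) ⟶ [v, B(A, X)]` in `V` induced by a
unit `η : v ⟶ B(A, T)`, where `T` is a candidate tensor `v ⊗ A`. -/
def tensorComparison {v : V} {A T : B} (η : v ⟶ (A ⟶[V] T)) (X : B) :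
    (T ⟶[V] X) ⟶ (ihom v).obj (A ⟶[V] X) :=
  MonoidalClosed.curry (eComp V A T X) ≫ (MonoidalClosed.pre η).app (A ⟶[V] X)

/-- `η : v ⟶ B(A,T)` exhibits `T` as a tensor `v ⊗ A` in the enriched sense. -/
def IsTensorUnit (v : V) (A T : B) (η : v ⟶ (A ⟶[V] T)) : Prop :=
  ∀ X : B, IsIso (tensorComparison V B η X)

/-- `B` is tensored over `V`. -/
def Tensored : Prop :=
  ∀ (v : V) (A : B), ∃ (T : B) (η : v ⟶ (A ⟶[V] T)), IsTensorUnit V B v A T η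

/-- `E` is closed under tensors: whenever tensors exist, `v ⊗ e` lies in `E` for `e ∈ E`. -/
def ClosedUnderTensors (E : MorphismProperty B) : Prop :=
  ∀ (v : V) ⦃A₁ A₂ : B⦄ (e : A₁ ⟶ A₂) {T₁ T₂ : B}
    (η₁ : v ⟶ (A₁ ⟶[V] T₁)) (η₂ : v ⟶ (A₂ ⟶[V] T₂)),
    IsTensorUnit V B v A₁ T₁ η₁ → IsTensorUnit V B v A₂ T₂ η₂ → E e →
      ∀ t : T₁ ⟶ T₂, η₁ ≫ eHomWhiskerLeft V A₁ t = η₂ ≫ eHomWhiskerRight V e T₂ → E t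

/-- comparison morphism `B(A, C) ⟶ [v, B(A, X)]` in `V` induced by a
counit `ε : v ⟶ B(C, X)`, where `C` is a candidate cotensor `[v, X]`. -/
def cotensorComparison {v : V} {C X : B} (ε : v ⟶ (C ⟶[V] X)) (A : B) :
    (A ⟶[V] C) ⟶ (ihom v).obj (A ⟶[V] X) :=
  MonoidalClosed.curry ((β_ (C ⟶[V] X) (A ⟶[V] C)).hom ≫ eComp V A C X) ≫
    (MonoidalClosed.pre ε).app (A ⟶[V] X)

/-- `ε : v ⟶ B(C,X)` exhibits `C` as a cotensor `[v, X]` in the enriched sense. -/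
def IsCotensorCounit (v : V) (X C : B) (ε : v ⟶ (C ⟶[V] X)) : Prop :=
  ∀ A : B, IsIso (cotensorComparison V B ε A)

/-- `B` is cotensored over `V`. -/
def Cotensored : Prop :=
  ∀ (v : V) (X : B), ∃ (C : B) (ε : v ⟶ (C ⟶[V] X)), IsCotensorCounit V B v X C ε

/-- `M` is closed under cotensors: `[v, m]` lies in `M` for `m ∈ M`. -/
def ClosedUnderCotensors (M : MorphismProperty B) : Prop :=
  ∀ (v : V) ⦃X₁ X₂ : B⦄ (m : X₁ ⟶ X₂) {C₁ C₂ : B}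
    (ε₁ : v ⟶ (C₁ ⟶[V] X₁)) (ε₂ : v ⟶ (C₂ ⟶[V] X₂)),
    IsCotensorCounit V B v X₁ C₁ ε₁ → IsCotensorCounit V B v X₂ C₂ ε₂ → M m →
      ∀ t : C₁ ⟶ C₂, ε₁ ≫ eHomWhiskerLeft V C₁ m = ε₂ ≫ eHomWhiskerRight V t X₂ → M t

/-- a `V`-functor from a `V`-category `J` to an enriched ordinary category `D`. -/
structure VFunctor (J : Type u₃) [EnrichedCategory V J]
    (D : Type u₄) [Category.{v₄} D] [EnrichedOrdinaryCategory V D] where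
  obj : J → D
  emap : ∀ X Y : J, (X ⟶[V] Y) ⟶ (obj X ⟶[V] obj Y)
  emap_id : ∀ X : J, eId V X ≫ emap X X = eId V (obj X)
  emap_comp : ∀ X Y Z : J,
    eComp V X Y Z ≫ emap X Z = (emap X Y ⊗ₘ emap Y Z) ≫ eComp V (obj X) (obj Y) (obj Z)

/-- the underlying action of a `V`-functor on ordinary morphisms. -/
def VFunctor.map' {J : Type u₃} [Category.{v₃} J] [EnrichedOrdinaryCategory V J]
    {D : Type u₄} [Category.{v₄} D] [EnrichedOrdinaryCategory V D]
    (F : VFunctor V J D) {X Y : J} (f : X ⟶ Y) : F.obj X ⟶ F.obj Y :=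
  (eHomEquiv V).symm (eHomEquiv V f ≫ F.emap X Y)

/-- a `V`-adjunction `F ⊣ G`, given by a `V`-natural isomorphism
`D(F A, X) ≅ A(A, G X)` of hom-objects. -/
structure VAdjunction {A : Type u₃} [Category.{v₃} A] [EnrichedOrdinaryCategory V A]
    {D : Type u₄} [Category.{v₄} D] [EnrichedOrdinaryCategory V D]
    (F : VFunctor V A D) (G : VFunctor V D A) where
  iso : ∀ (X : A) (Y : D), (F.obj X ⟶[V] Y) ≅ (X ⟶[V] G.obj Y)
  nat_right : ∀ (X : A) (Y Y' : D),
    eComp V (F.obj X) Y Y' ≫ (iso X Y').hom =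
      ((iso X Y).hom ⊗ₘ G.emap Y Y') ≫ eComp V X (G.obj Y) (G.obj Y')
  nat_left : ∀ (X X' : A) (Y : D),
    (F.emap X X' ▷ (F.obj X' ⟶[V] Y)) ≫ eComp V (F.obj X) (F.obj X') Y ≫ (iso X Y).hom =
      ((X ⟶[V] X') ◁ (iso X' Y).hom) ≫ eComp V X X' (G.obj Y)

/-- a `V`-functor `J → V` (a weight), presented by its uncurried action. -/
structure VWeight (J : Type u₃) [EnrichedCategory V J] where
  obj : J → V
  act : ∀ j j' : J, obj j ⊗ (j ⟶[V] j') ⟶ obj j'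
  act_id : ∀ j : J, (obj j ◁ eId V j) ≫ act j j = (ρ_ (obj j)).hom
  act_comp : ∀ j j' j'' : J,
    (α_ (obj j) (j ⟶[V] j') (j' ⟶[V] j'')).inv ≫ (act j j' ▷ (j' ⟶[V] j'')) ≫ act j' j'' =
      (obj j ◁ eComp V j j' j'') ≫ act j j''

/-- a `V`-natural transformation between `V`-functors. -/
structure VNatTrans {J : Type u₃} [EnrichedCategory V J]
    {D : Type u₄} [Category.{v₄} D] [EnrichedOrdinaryCategory V D]
    (F G : VFunctor V J D) where
  app : ∀ j : J, F.obj j ⟶ G.obj j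
  naturality : ∀ j j' : J,
    F.emap j j' ≫ eHomWhiskerLeft V (F.obj j) (app j') =
      G.emap j j' ≫ eHomWhiskerRight V (app j) (G.obj j')

/-- `cone` exhibits `L` as the `V`-enriched weighted (indexed) limit `[W, F]`. -/
structure IsWeightedLimit {J : Type u₃} [EnrichedCategory V J]
    {D : Type u₄} [Category.{v₄} D] [EnrichedOrdinaryCategory V D]
    (W : VWeight V J) (F : VFunctor V J D) (L : D)
    (cone : ∀ j : J, W.obj j ⟶ (L ⟶[V] F.obj j)) : Prop where
  natural : ∀ j j' : J,
    W.act j j' ≫ cone j' =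
      (cone j ▷ (j ⟶[V] j')) ≫ ((L ⟶[V] F.obj j) ◁ F.emap j j') ≫
        eComp V L (F.obj j) (F.obj j')
  universal : ∀ (A : D) (Z : V) (μ : ∀ j : J, Z ⊗ W.obj j ⟶ (A ⟶[V] F.obj j)),
    (∀ j j' : J,
      (Z ◁ W.act j j') ≫ μ j' =
        (α_ Z (W.obj j) (j ⟶[V] j')).inv ≫ (μ j ▷ (j ⟶[V] j')) ≫
          ((A ⟶[V] F.obj j) ◁ F.emap j j') ≫ eComp V A (F.obj j) (F.obj j')) →
      ∃! t : Z ⟶ (A ⟶[V] L), ∀ j : J,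
        (t ▷ W.obj j) ≫ ((A ⟶[V] L) ◁ cone j) ≫ eComp V A L (F.obj j) = μ j

/-- `B` is `V`-finitely-well-complete: it has finite `V`-limits and `V`-intersections
of arbitrary class-indexed families of `V`-strong monomorphisms. -/
def VFinitelyWellComplete : Prop :=
  HasFiniteVLimits V B ∧
    ∀ {ι : Type (max u₂ v₂)} {C : B} (X : ι → B) (f : ∀ i, X i ⟶ C),
      (∀ i, vStrongMono V B (f i)) →
        ∃ (P : B) (m : P ⟶ C) (π : ∀ i, P ⟶ X i), IsVFibreProduct V B f m π

/-- `B` is finitely well-complete (ordinary sense): it has finite limits and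
intersections of arbitrary class-indexed families of strong monomorphisms. -/
def OrdFinitelyWellComplete : Prop :=
  HasFiniteLimits B ∧
    ∀ {ι : Type (max u₂ v₂)} {C : B} (X : ι → B) (f : ∀ i, X i ⟶ C),
      (∀ i, ordStrongMono B (f i)) →
        ∃ (P : B) (m : P ⟶ C) (π : ∀ i, P ⟶ X i), OrdIsFibreProduct B f m π


section Aux

set_option linter.unusedSectionVars false

lemma eHomEquiv_comp_left' {X Y Z : B} (f : X ⟶ Y) (g : Y ⟶ Z) :
    eHomEquiv V (f ≫ g) = eHomEquiv V f ≫ eHomWhiskerLeft V X g := by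
  rw [eHomEquiv_comp, eHomWhiskerLeft, MonoidalCategory.tensorHom_def]
  have : (λ_ (𝟙_ V)).inv ≫ eHomEquiv V f ▷ 𝟙_ V = eHomEquiv V f ≫ (ρ_ _).inv := by
    rw [unitors_inv_equal, ← rightUnitor_inv_naturality]
  simp only [Category.assoc] at this ⊢
  rw [reassoc_of% this]

lemma eHomEquiv_comp_right' {X Y Z : B} (f : X ⟶ Y) (g : Y ⟶ Z) :
    eHomEquiv V (f ≫ g) = eHomEquiv V g ≫ eHomWhiskerRight V f Z := by
  rw [eHomEquiv_comp, eHomWhiskerRight, MonoidalCategory.tensorHom_def']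
  have : (λ_ (𝟙_ V)).inv ≫ 𝟙_ V ◁ eHomEquiv V g = eHomEquiv V g ≫ (λ_ _).inv := by
    rw [← leftUnitor_inv_naturality]
  simp only [Category.assoc] at this ⊢
  rw [reassoc_of% this]

lemma uncurry_tensorComparison {v : V} {A T : B} (η : v ⟶ (A ⟶[V] T)) {X : B} (t : T ⟶ X) :
    (ρ_ v).inv ≫ MonoidalClosed.uncurry (eHomEquiv V t ≫ tensorComparison V B η X)
      = η ≫ eHomWhiskerLeft V A t := by
  rw [tensorComparison, ← Category.assoc (eHomEquiv V t), MonoidalClosed.uncurry_natural_left,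
    MonoidalClosed.uncurry_pre]
  rw [whisker_exchange_assoc, ← MonoidalClosed.uncurry_eq,
    MonoidalClosed.uncurry_natural_left, MonoidalClosed.uncurry_curry, eHomWhiskerLeft]
  have h1 : (ρ_ v).inv ≫ η ▷ 𝟙_ V = η ≫ (ρ_ _).inv := (rightUnitor_inv_naturality η).symm
  rw [reassoc_of% h1]

lemma uncurry_cotensorComparison {v : V} {C X : B} (ε : v ⟶ (C ⟶[V] X)) {A : B} (t : A ⟶ C) :
    (ρ_ v).inv ≫ MonoidalClosed.uncurry (eHomEquiv V t ≫ cotensorComparison V B ε A)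
      = ε ≫ eHomWhiskerRight V t X := by
  rw [cotensorComparison, ← Category.assoc (eHomEquiv V t), MonoidalClosed.uncurry_natural_left,
    MonoidalClosed.uncurry_pre]
  rw [whisker_exchange_assoc, ← MonoidalClosed.uncurry_eq,
    MonoidalClosed.uncurry_natural_left, MonoidalClosed.uncurry_curry]
  have h1 : (ρ_ v).inv ≫ ε ▷ 𝟙_ V = ε ≫ (ρ_ _).inv := (rightUnitor_inv_naturality ε).symm
  have h2 : _ ◁ eHomEquiv V t ≫ (β_ (C ⟶[V] X) (A ⟶[V] C)).hom
      = (β_ (C ⟶[V] X) (𝟙_ V)).hom ≫ eHomEquiv V t ▷ _ :=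
    (BraidedCategory.braiding_naturality_right _ (eHomEquiv V t))
  have h3 : (ρ_ (C ⟶[V] X)).inv ≫ (β_ (C ⟶[V] X) (𝟙_ V)).hom = (λ_ _).inv := by
    rw [Iso.inv_comp_eq, Iso.eq_comp_inv, braiding_leftUnitor]
  rw [eHomWhiskerRight, reassoc_of% h1, reassoc_of% h2, reassoc_of% h3]

/-- the equiv `(𝟙 ⟶ [v,W]) ≃ (v ⟶ W)`. -/
def unitIhomEquiv (v W : V) : (𝟙_ V ⟶ (ihom v).obj W) ≃ (v ⟶ W) where
  toFun g := (ρ_ v).inv ≫ MonoidalClosed.uncurry g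
  invFun f := MonoidalClosed.curry ((ρ_ v).hom ≫ f)
  left_inv g := by
    dsimp only
    rw [Iso.hom_inv_id_assoc, MonoidalClosed.curry_uncurry]
  right_inv f := by
    dsimp only
    rw [MonoidalClosed.uncurry_curry, Iso.inv_hom_id_assoc]

lemma isTensorUnit_bijective {v : V} {A T : B} {η : v ⟶ (A ⟶[V] T)}
    (h : IsTensorUnit V B v A T η) (X : B) :
    Function.Bijective (fun t : T ⟶ X => η ≫ eHomWhiskerLeft V A t) := by
  have hiso := h X
  have key : (fun t : T ⟶ X => η ≫ eHomWhiskerLeft V A t)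
      = (unitIhomEquiv V v _) ∘ (fun g => g ≫ tensorComparison V B η X) ∘ (eHomEquiv V) := by
    funext t
    exact (uncurry_tensorComparison V B η t).symm
  rw [key]
  haveI := hiso
  refine (unitIhomEquiv V v _).bijective.comp
    (Function.Bijective.comp ?_ (eHomEquiv V).bijective)
  constructor
  · intro a b hab
    dsimp only at hab
    rwa [cancel_mono] at hab
  · intro g
    exact ⟨g ≫ CategoryTheory.inv (tensorComparison V B η X), by simp⟩

lemma isCotensorCounit_bijective {v : V} {X C : B} {ε : v ⟶ (C ⟶[V] X)}
    (h : IsCotensorCounit V B v X C ε) (A : B) :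
    Function.Bijective (fun t : A ⟶ C => ε ≫ eHomWhiskerRight V t X) := by
  have hiso := h A
  have key : (fun t : A ⟶ C => ε ≫ eHomWhiskerRight V t X)
      = (unitIhomEquiv V v _) ∘ (fun g => g ≫ cotensorComparison V B ε A) ∘ (eHomEquiv V) := by
    funext t
    exact (uncurry_cotensorComparison V B ε t).symm
  rw [key]
  haveI := hiso
  refine (unitIhomEquiv V v _).bijective.comp
    (Function.Bijective.comp ?_ (eHomEquiv V).bijective)
  constructor
  · intro a b hab
    dsimp only at hab
    rwa [cancel_mono] at hab
  · intro g
    exact ⟨g ≫ CategoryTheory.inv (cotensorComparison V B ε A), by simp⟩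

lemma vMono_of_mono (ht : Tensored V B) {X₁ X₂ : B} {m : X₁ ⟶ X₂} (hm : Mono m) :
    vMono V B m := by
  intro A
  constructor
  intro Z a b hab
  obtain ⟨T, η, hT⟩ := ht Z A
  obtain ⟨s, rfl⟩ := (isTensorUnit_bijective V B hT X₁).2 a
  obtain ⟨s', rfl⟩ := (isTensorUnit_bijective V B hT X₁).2 b
  dsimp only at hab ⊢
  have : s ≫ m = s' ≫ m := by
    apply (isTensorUnit_bijective V B hT X₂).1
    dsimp only
    rw [eHomWhiskerLeft_comp, eHomWhiskerLeft_comp, ← Category.assoc, ← Category.assoc]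
    exact hab
  rw [cancel_mono] at this
  rw [this]

lemma vEpi_of_epi (hc : Cotensored V B) {A₁ A₂ : B} {e : A₁ ⟶ A₂} (he : Epi e) :
    vEpi V B e := by
  intro A
  constructor
  intro Z a b hab
  obtain ⟨C, ε, hC⟩ := hc Z A
  obtain ⟨s, rfl⟩ := (isCotensorCounit_bijective V B hC A₂).2 a
  obtain ⟨s', rfl⟩ := (isCotensorCounit_bijective V B hC A₂).2 b
  dsimp only at hab ⊢
  have : e ≫ s = e ≫ s' := by
    apply (isCotensorCounit_bijective V B hC A₁).1
    dsimp only
    rw [eHomWhiskerRight_comp, eHomWhiskerRight_comp, ← Category.assoc, ← Category.assoc]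
    exact hab
  rw [cancel_epi] at this
  rw [this]

lemma mono_of_vMono {X₁ X₂ : B} {m : X₁ ⟶ X₂} (hm : vMono V B m) : Mono m := by
  constructor
  intro W a b hab
  haveI := hm W
  apply (eHomEquiv V).injective
  rw [← cancel_mono (eHomWhiskerLeft V W m), ← eHomEquiv_comp_left', ← eHomEquiv_comp_left', hab]

lemma epi_of_vEpi {A₁ A₂ : B} {e : A₁ ⟶ A₂} (he : vEpi V B e) : Epi e := by
  constructor
  intro W a b hab
  haveI := he W
  apply (eHomEquiv V).injective
  rw [← cancel_mono (eHomWhiskerRight V e W), ← eHomEquiv_comp_right', ← eHomEquiv_comp_right',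
    hab]

lemma ordOrth_of_vOrth {A₁ A₂ X₁ X₂ : B} {e : A₁ ⟶ A₂} {m : X₁ ⟶ X₂}
    (h : VOrth V B e m) : OrdOrth B e m := by
  intro u v huv
  have hcond : eHomEquiv V v ≫ eHomWhiskerRight V e X₂
      = eHomEquiv V u ≫ eHomWhiskerLeft V A₁ m := by
    rw [← eHomEquiv_comp_right', ← eHomEquiv_comp_left', huv]
  refine ⟨(eHomEquiv V).symm (h.lift (eHomEquiv V v) (eHomEquiv V u) hcond), ⟨?_, ?_⟩, ?_⟩
  · apply (eHomEquiv V).injective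
    rw [eHomEquiv_comp_right']
    simp only [Equiv.apply_symm_apply]
    exact h.lift_snd _ _ _
  · apply (eHomEquiv V).injective
    rw [eHomEquiv_comp_left']
    simp only [Equiv.apply_symm_apply]
    exact h.lift_fst _ _ _
  · intro d' ⟨hd1, hd2⟩
    apply (eHomEquiv V).injective
    simp only [Equiv.apply_symm_apply]
    apply h.hom_ext
    · rw [h.lift_fst, ← eHomEquiv_comp_left', hd2]
    · rw [h.lift_snd, ← eHomEquiv_comp_right', hd1]

lemma isPullback_of_pointwise {C : Type u₃} [Category.{v₃} C] {P X Y Z : C}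
    {fst : P ⟶ X} {snd : P ⟶ Y} {f : X ⟶ Z} {g : Y ⟶ Z} (w : fst ≫ f = snd ≫ g)
    (H : ∀ (W : C) (x : W ⟶ X) (y : W ⟶ Y), x ≫ f = y ≫ g →
      ∃! t : W ⟶ P, t ≫ fst = x ∧ t ≫ snd = y) : IsPullback fst snd f g := by
  have L := fun s : PullbackCone f g => H s.pt s.fst s.snd s.condition
  exact IsPullback.of_isLimit (PullbackCone.IsLimit.mk w (fun s => (L s).choose)
    (fun s => (L s).choose_spec.1.1) (fun s => (L s).choose_spec.1.2)
    (fun s t ht1 ht2 => (L s).choose_spec.2 t ⟨ht1, ht2⟩))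

lemma vOrth_of_strong (ht : Tensored V B) (hc : Cotensored V B)
    {A₁ A₂ X₁ X₂ : B} (e : A₁ ⟶ A₂) (m : X₁ ⟶ X₂) (hm : Mono m)
    (he : ∀ ⦃Y₁ Y₂ : B⦄ (n : Y₁ ⟶ Y₂), Mono n → OrdOrth B e n) :
    VOrth V B e m := by
  apply isPullback_of_pointwise (eHom_whisker_exchange V e m)
  intro Z x y hxy
  obtain ⟨C₁, ε₁, h₁⟩ := hc Z X₁
  obtain ⟨C₂, ε₂, h₂⟩ := hc Z X₂
  obtain ⟨mbar, hmbar⟩ :=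
    (isCotensorCounit_bijective V B h₂ C₁).2 (ε₁ ≫ eHomWhiskerLeft V C₁ m)
  dsimp only at hmbar
  have corr : ∀ {A : B} (t : A ⟶ C₁),
      ε₂ ≫ eHomWhiskerRight V (t ≫ mbar) X₂
        = (ε₁ ≫ eHomWhiskerRight V t X₁) ≫ eHomWhiskerLeft V A m := by
    intro A t
    rw [eHomWhiskerRight_comp, reassoc_of% hmbar, eHom_whisker_exchange, Category.assoc]
  have hmono : Mono mbar := by
    constructor
    intro A s s' hss
    apply (isCotensorCounit_bijective V B h₁ A).1
    dsimp only
    haveI := vMono_of_mono V B ht hm A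
    rw [← cancel_mono (eHomWhiskerLeft V A m), ← corr s, ← corr s', hss]
  obtain ⟨v, rfl⟩ := (isCotensorCounit_bijective V B h₂ A₂).2 x
  obtain ⟨u, rfl⟩ := (isCotensorCounit_bijective V B h₁ A₁).2 y
  dsimp only at hxy ⊢
  have sq : u ≫ mbar = e ≫ v := by
    apply (isCotensorCounit_bijective V B h₂ A₁).1
    dsimp only
    rw [corr u, eHomWhiskerRight_comp, ← Category.assoc, ← hxy, Category.assoc]
  obtain ⟨d, ⟨hd1, hd2⟩, hdu⟩ := he mbar hmono u v sq
  refine ⟨ε₁ ≫ eHomWhiskerRight V d X₁, ⟨?_, ?_⟩, ?_⟩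
  · rw [← corr d, hd2]
  · rw [Category.assoc, ← eHomWhiskerRight_comp, hd1]
  · rintro t' ⟨ht1, ht2⟩
    obtain ⟨d', rfl⟩ := (isCotensorCounit_bijective V B h₁ A₂).2 t'
    dsimp only at ht1 ht2
    have h1' : e ≫ d' = u := by
      apply (isCotensorCounit_bijective V B h₁ A₁).1
      dsimp only
      rw [eHomWhiskerRight_comp, ← Category.assoc, ht2]
    have h2' : d' ≫ mbar = v := by
      apply (isCotensorCounit_bijective V B h₂ A₂).1
      dsimp only
      rw [corr d', ht1]
    rw [hdu d' ⟨h1', h2'⟩]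

lemma ord_fact (hfl : HasFiniteLimits B)
    (hint : ∀ {ι : Type (max u₂ v₂)} {C : B} (X : ι → B) (f : ∀ i, X i ⟶ C),
      (∀ i, Mono (f i)) →
        ∃ (P : B) (m : P ⟶ C) (π : ∀ i, P ⟶ X i), OrdIsFibreProduct B f m π)
    {X Y : B} (f : X ⟶ Y) :
    ∃ (Z : B) (e : X ⟶ Z) (m : Z ⟶ Y), ordStrongEpi B e ∧ Mono m ∧ e ≫ m = f := by
  haveI := hfl
  classical
  let ι : Type (max u₂ v₂) := Σ (Z : B), {p : (Z ⟶ Y) × (X ⟶ Z) // Mono p.1 ∧ p.2 ≫ p.1 = f}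
  let Xi : ι → B := fun i => i.1
  let g : ∀ i, Xi i ⟶ Y := fun i => i.2.1.1
  have hg : ∀ i, Mono (g i) := fun i => i.2.2.1
  obtain ⟨P, m, π, hcomm, huniv⟩ := hint Xi g hg
  have hm : Mono m := by
    constructor
    intro W a b hab
    have hπ : ∀ i, a ≫ π i = b ≫ π i := by
      intro i
      haveI := hg i
      rw [← cancel_mono (g i), Category.assoc, Category.assoc, hcomm i, hab]
    obtain ⟨t, ht, htu⟩ := huniv (b ≫ m) (fun i => b ≫ π i)
      (fun i => by rw [Category.assoc, hcomm i])
    have ha := htu a ⟨hab, hπ⟩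
    have hb := htu b ⟨rfl, fun i => rfl⟩
    rw [ha, hb]
  obtain ⟨e, ⟨hem, heπ⟩, _⟩ := huniv f (fun i => i.2.1.2) (fun i => i.2.2.2)
  have split : ∀ {Q : B} (q : Q ⟶ P) (wq : X ⟶ Q), Mono q → wq ≫ q = e →
      ∃ σ : P ⟶ Q, σ ≫ q = 𝟙 P ∧ e ≫ σ = wq := by
    intro Q q wq hq hwq
    haveI := hq
    haveI : Mono (q ≫ m) := mono_comp q m
    let i : ι := ⟨Q, ⟨q ≫ m, wq⟩, ⟨this, by rw [← Category.assoc, hwq, hem]⟩⟩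
    have hqi : π i ≫ (q ≫ m) = m := hcomm i
    have hsplit : π i ≫ q = 𝟙 P := by
      rw [← cancel_mono m, Category.assoc, hqi, Category.id_comp]
    refine ⟨π i, hsplit, ?_⟩
    rw [← cancel_mono q, Category.assoc, hsplit, Category.comp_id, hwq]
  refine ⟨P, e, m, ⟨?_, ?_⟩, hm, hem⟩
  · -- Epi e
    constructor
    intro W a b hab
    have hlift : equalizer.lift e hab ≫ equalizer.ι a b = e := equalizer.lift_ι _ _
    obtain ⟨σ, hσ, -⟩ := split (equalizer.ι a b) (equalizer.lift e hab) inferInstance hlift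
    calc a = (σ ≫ equalizer.ι a b) ≫ a := by rw [hσ, Category.id_comp]
    _ = σ ≫ (equalizer.ι a b ≫ b) := by rw [Category.assoc, equalizer.condition]
    _ = (σ ≫ equalizer.ι a b) ≫ b := by rw [Category.assoc]
    _ = b := by rw [hσ, Category.id_comp]
  · -- orthogonality to monos
    intro Y₁ Y₂ n hn u v huv
    haveI := hn
    have hlift : pullback.lift u e huv ≫ pullback.snd n v = e := pullback.lift_snd _ _ _
    obtain ⟨σ, hσ, heσ⟩ := split (pullback.snd n v) (pullback.lift u e huv) inferInstance hlift
    refine ⟨σ ≫ pullback.fst n v, ⟨?_, ?_⟩, ?_⟩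
    · rw [← Category.assoc, heσ, pullback.lift_fst]
    · rw [Category.assoc, pullback.condition, ← Category.assoc, hσ, Category.id_comp]
    · rintro d' ⟨-, hd2⟩
      rw [← cancel_mono n, hd2, Category.assoc, pullback.condition, ← Category.assoc, hσ,
        Category.id_comp]

end Aux

/-- If `B` is tensored and cotensored with finite limits and arbitrary class-indexed
intersections of monomorphisms, then `(StrEpi_V B, Mono_V B) = (StrEpi B, Mono B)`
is a `V`-factorization system. -/
theorem stmt18 (ht : Tensored V B) (hc : Cotensored V B) (hfl : HasFiniteLimits B)
    (hint : ∀ {ι : Type (max u₂ v₂)} {C : B} (X : ι → B) (f : ∀ i, X i ⟶ C),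
      (∀ i, Mono (f i)) →
        ∃ (P : B) (m : P ⟶ C) (π : ∀ i, P ⟶ X i), OrdIsFibreProduct B f m π) :
    vStrongEpi V B = ordStrongEpi B ∧ vMono V B = ordMono B ∧
      IsVFactorizationSystem V B (vStrongEpi V B) (vMono V B) := by
  haveI := hfl
  -- the two-way transfers
  have hSE : vStrongEpi V B = ordStrongEpi B := by
    apply MorphismProperty.ext
    intro A₁ A₂ e
    constructor
    · intro he
      refine ⟨epi_of_vEpi V B (he.1), fun X₁ X₂ m hm => ?_⟩
      exact ordOrth_of_vOrth V B (he.2 m (vMono_of_mono V B ht hm))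
    · intro he
      refine ⟨vEpi_of_epi V B hc he.1, fun X₁ X₂ m hm => ?_⟩
      exact vOrth_of_strong V B ht hc e m (mono_of_vMono V B hm) he.2
  have hM : vMono V B = ordMono B := by
    apply MorphismProperty.ext
    intro X₁ X₂ m
    exact ⟨fun hm => mono_of_vMono V B hm, fun hm => vMono_of_mono V B ht hm⟩
  have hfact : FactorizationsExist B (vStrongEpi V B) (vMono V B) := by
    intro X Y f
    obtain ⟨Z, e, m, he, hm, hcomp⟩ := ord_fact B hfl @hint f
    exact ⟨Z, e, m, hSE ▸ he, vMono_of_mono V B ht hm, hcomp⟩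
  refine ⟨hSE, hM, ⟨⟨?_, ?_⟩, hfact⟩⟩
  · -- vRlp (vStrongEpi) = vMono
    apply MorphismProperty.ext
    intro X₁ X₂ m
    constructor
    · intro h
      obtain ⟨Z, e, m', he, hm', hcomp⟩ := ord_fact B hfl @hint m
      have hOrth : OrdOrth B e m := ordOrth_of_vOrth V B (h e (hSE ▸ he))
      obtain ⟨d, ⟨hd1, hd2⟩, -⟩ := hOrth (𝟙 X₁) m' (by rw [Category.id_comp, hcomp])
      haveI : IsIso e := by
        refine ⟨d, hd1, ?_⟩
        haveI := he.1
        rw [← cancel_epi e, ← Category.assoc, hd1, Category.id_comp, Category.comp_id]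
      haveI := hm'
      have : Mono m := by rw [← hcomp]; exact mono_comp e m'
      exact vMono_of_mono V B ht this
    · intro hm e1 e2 e he
      exact he.2 m hm
  · -- vLlp (vMono) = vStrongEpi
    apply MorphismProperty.ext
    intro A₁ A₂ e
    constructor
    · intro h
      refine ⟨?_, h⟩
      have hepi : Epi e := by
        constructor
        intro W a b hab
        have hmι : Mono (equalizer.ι a b) := inferInstance
        have hOrth : OrdOrth B e (equalizer.ι a b) :=
          ordOrth_of_vOrth V B (h (equalizer.ι a b) (vMono_of_mono V B ht hmι))
        obtain ⟨d, ⟨hd1, hd2⟩, -⟩ := hOrth (equalizer.lift e hab) (𝟙 A₂)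
          (by rw [Category.comp_id, equalizer.lift_ι])
        haveI : IsIso (equalizer.ι a b) := by
          refine ⟨d, ?_, hd2⟩
          rw [← cancel_mono (equalizer.ι a b), Category.assoc, hd2, Category.id_comp,
            Category.comp_id]
        rw [← cancel_epi (equalizer.ι a b), equalizer.condition]
      exact vEpi_of_epi V B hc hepi
    · intro he
      exact he.2

end EnrichedFS
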